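/- Let 1 < α ≤ 2 and define p₁ : ℝ → ℝ by p₁(x) = (1/π) ∫₀^∞ cos(ux) e^{−u^α} du. Then for every ε > 0 there exists a constant c(ε) < ∞ such that |x|^{α+1} |p₁(x)| ≤ c(ε) for all x with |x| > ε. -/

import Mathlib

open MeasureTheory Real Set
open Filter

section Helpers

variable {α : ℝ}

private lemma st_intPow (h1 : 1 < α) {s : ℝ} (hs : -1 < s) :
    IntegrableOn (fun u : ℝ => u ^ s * Real.exp (-(u ^ α))) (Ioi 0) :=
  integrableOn_rpow_mul_exp_neg_rpow hs (zero_lt_one.trans h1)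

private lemma st_intE (h1 : 1 < α) :
    IntegrableOn (fun u : ℝ => Real.exp (-(u ^ α))) (Ioi 0) := by
  simpa using st_intPow h1 (s := 0) (by norm_num)

private lemma st_intTrig (h1 : 1 < α) {s : ℝ} (hs : -1 < s) (φ : ℝ → ℝ)
    (hφc : Continuous φ) (hφ : ∀ t, |φ t| ≤ 1) :
    IntegrableOn (fun u : ℝ => φ u * (u ^ s * Real.exp (-(u ^ α)))) (Ioi 0) :=
  (st_intPow h1 hs).bdd_mul hφc.aestronglyMeasurable (c := 1) (ae_of_all _ fun t => hφ t)

private lemma st_hasDerivE (_hα : α ≠ 0) {u : ℝ} (hu : u ≠ 0) :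
    HasDerivAt (fun u : ℝ => Real.exp (-(u ^ α)))
      (Real.exp (-(u ^ α)) * -(α * u ^ (α - 1))) u :=
  ((Real.hasDerivAt_rpow_const (Or.inl hu)).neg).exp

private lemma st_tendsto_pow_exp (h1 : 1 < α) (s : ℝ) :
    Tendsto (fun u : ℝ => u ^ s * Real.exp (-(u ^ α))) atTop (nhds 0) := by
  have h := rpow_mul_exp_neg_mul_rpow_isLittleO_exp_neg s h1 one_pos
  have h2 : Tendsto (fun x : ℝ => Real.exp (-(1/2) * x)) atTop (nhds 0) := by
    rw [Real.tendsto_exp_comp_nhds_zero]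
    exact (tendsto_const_mul_atBot_of_neg (by norm_num : -(1/2 : ℝ) < 0)).2 tendsto_id
  have := h.isBigO.trans_tendsto h2
  simpa [neg_mul, one_mul] using this

private lemma st_tendsto_trig (h1 : 1 < α) (s : ℝ) (φ : ℝ → ℝ) (hφ : ∀ t, |φ t| ≤ 1) :
    Tendsto (fun u : ℝ => φ u * (u ^ s * Real.exp (-(u ^ α)))) atTop (nhds 0) := by
  refine squeeze_zero_norm' (a := fun u : ℝ => u ^ s * Real.exp (-(u ^ α))) ?_ ?_
  · filter_upwards [eventually_ge_atTop (0:ℝ)] with u hu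
    have hg : (0:ℝ) ≤ u ^ s * Real.exp (-(u ^ α)) :=
      mul_nonneg (Real.rpow_nonneg hu s) (Real.exp_pos _).le
    rw [Real.norm_eq_abs, abs_mul, abs_of_nonneg hg]
    exact mul_le_of_le_one_left hg (hφ u)
  · exact st_tendsto_pow_exp h1 s

end Helpers

section Steps

variable {α : ℝ}

private lemma st_cos_bd (y : ℝ) : ∀ t : ℝ, |Real.cos (t * y)| ≤ 1 := fun t => Real.abs_cos_le_one _
private lemma st_sin_bd (y : ℝ) : ∀ t : ℝ, |Real.sin (t * y)| ≤ 1 := fun t => Real.abs_sin_le_one _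

private lemma st_cos_cont (y : ℝ) : Continuous (fun t : ℝ => Real.cos (t * y)) :=
  Real.continuous_cos.comp (continuous_id.mul continuous_const)
private lemma st_sin_cont (y : ℝ) : Continuous (fun t : ℝ => Real.sin (t * y)) :=
  Real.continuous_sin.comp (continuous_id.mul continuous_const)

private lemma st_intCosE (h1 : 1 < α) (y : ℝ) :
    IntegrableOn (fun u : ℝ => Real.cos (u * y) * Real.exp (-(u ^ α))) (Ioi 0) :=
  (st_intE h1).bdd_mul (st_cos_cont y).aestronglyMeasurable (c := 1) (ae_of_all _ fun t => st_cos_bd y t)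

private lemma st_step1 (h1 : 1 < α) (y : ℝ) :
    y * ∫ u in Ioi (0:ℝ), Real.cos (u * y) * Real.exp (-(u ^ α))
      = α * ∫ u in Ioi (0:ℝ), Real.sin (u * y) * (u ^ (α - 1) * Real.exp (-(u ^ α))) := by
  have hα0 : (0:ℝ) < α := by linarith
  have i1 := st_intCosE h1 y
  have i2 := st_intTrig h1 (s := α - 1) (by linarith) _ (st_sin_cont y) (st_sin_bd y)
  have key : ∫ u in Ioi (0:ℝ),
      (y * (Real.cos (u * y) * Real.exp (-(u ^ α)))
        - α * (Real.sin (u * y) * (u ^ (α - 1) * Real.exp (-(u ^ α)))))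
      = 0 - Real.sin (0 * y) * Real.exp (-((0:ℝ) ^ α)) := by
    apply integral_Ioi_of_hasDerivAt_of_tendsto
      (f := fun u : ℝ => Real.sin (u * y) * Real.exp (-(u ^ α)))
    · apply ContinuousAt.continuousWithinAt
      have hE : ContinuousAt (fun u : ℝ => Real.exp (-(u ^ α))) 0 :=
        ((Real.continuousAt_rpow_const 0 α (Or.inr hα0.le)).neg).rexp
      exact ((st_sin_cont y).continuousAt).mul hE
    · intro u hu
      have hd := ((hasDerivAt_mul_const y).sin).fun_mul (st_hasDerivE (ne_of_gt hα0) (ne_of_gt hu))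
      refine hd.congr_deriv ?_
      ring
    · exact (i1.const_mul y).sub (i2.const_mul α)
    · exact (st_tendsto_trig h1 0 _ (st_sin_bd y)).congr (fun u => by simp)
  rw [integral_sub (i1.const_mul y) (i2.const_mul α), integral_const_mul,
    integral_const_mul] at key
  simp at key
  linarith

private lemma st_step2 (h1 : 1 < α) (h2 : α ≤ 2) (y : ℝ) :
    y * ∫ u in Ioi (0:ℝ), Real.sin (u * y) * (u ^ (α - 1) * Real.exp (-(u ^ α)))
      = (α - 1) * (∫ u in Ioi (0:ℝ), Real.cos (u * y) * (u ^ (α - 2) * Real.exp (-(u ^ α))))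
        - α * ∫ u in Ioi (0:ℝ), Real.cos (u * y) * (u ^ (2*α - 2) * Real.exp (-(u ^ α))) := by
  have hα0 : (0:ℝ) < α := by linarith
  have i2 := st_intTrig h1 (s := α - 1) (by linarith) _ (st_sin_cont y) (st_sin_bd y)
  have iA := st_intTrig h1 (s := α - 2) (by linarith) _ (st_cos_cont y) (st_cos_bd y)
  have iB := st_intTrig h1 (s := 2*α - 2) (by linarith) _ (st_cos_cont y) (st_cos_bd y)
  have key : ∫ u in Ioi (0:ℝ),
      (-(y * (Real.sin (u * y) * (u ^ (α - 1) * Real.exp (-(u ^ α)))))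
        + ((α - 1) * (Real.cos (u * y) * (u ^ (α - 2) * Real.exp (-(u ^ α))))
          - α * (Real.cos (u * y) * (u ^ (2*α - 2) * Real.exp (-(u ^ α))))))
      = 0 - Real.cos (0 * y) * ((0:ℝ) ^ (α - 1) * Real.exp (-((0:ℝ) ^ α))) := by
    apply integral_Ioi_of_hasDerivAt_of_tendsto
      (f := fun u : ℝ => Real.cos (u * y) * (u ^ (α - 1) * Real.exp (-(u ^ α))))
    · apply ContinuousAt.continuousWithinAt
      have hE : ContinuousAt (fun u : ℝ => Real.exp (-(u ^ α))) 0 :=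
        ((Real.continuousAt_rpow_const 0 α (Or.inr hα0.le)).neg).rexp
      have hP : ContinuousAt (fun u : ℝ => u ^ (α - 1)) 0 :=
        Real.continuousAt_rpow_const 0 (α - 1) (Or.inr (by linarith))
      exact ((st_cos_cont y).continuousAt).mul (hP.mul hE)
    · intro u hu
      have hd := ((hasDerivAt_mul_const y).cos).fun_mul
        ((Real.hasDerivAt_rpow_const (p := α - 1) (Or.inl (ne_of_gt hu))).fun_mul
          (st_hasDerivE (ne_of_gt hα0) (ne_of_gt hu)))
      refine hd.congr_deriv ?_
      rw [show α - 1 - 1 = α - 2 by ring, show 2*α - 2 = (α - 1) + (α - 1) by ring,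
        Real.rpow_add hu]
      ring
    · exact ((i2.const_mul y).neg).add ((iA.const_mul (α - 1)).sub (iB.const_mul α))
    · exact (st_tendsto_trig h1 (α - 1) _ (st_cos_bd y)).congr (fun u => by simp)
  have hneg : IntegrableOn (fun u : ℝ =>
      -(y * (Real.sin (u * y) * (u ^ (α - 1) * Real.exp (-(u ^ α)))))) (Ioi 0) :=
    (i2.const_mul y).neg
  have hsub : IntegrableOn (fun u : ℝ =>
      (α - 1) * (Real.cos (u * y) * (u ^ (α - 2) * Real.exp (-(u ^ α))))
        - α * (Real.cos (u * y) * (u ^ (2*α - 2) * Real.exp (-(u ^ α))))) (Ioi 0) :=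
    (iA.const_mul (α - 1)).sub (iB.const_mul α)
  rw [integral_add hneg hsub, integral_neg,
    integral_sub (iA.const_mul (α - 1)) (iB.const_mul α),
    integral_const_mul, integral_const_mul, integral_const_mul] at key
  simp [Real.zero_rpow (ne_of_gt (show (0:ℝ) < α - 1 by linarith))] at key
  linarith

private lemma st_stepB (h1 : 1 < α) (y : ℝ) :
    y * ∫ u in Ioi (0:ℝ), Real.cos (u * y) * (u ^ (2*α - 2) * Real.exp (-(u ^ α)))
      = -((2*α - 2) * (∫ u in Ioi (0:ℝ), Real.sin (u * y) * (u ^ (2*α - 3) * Real.exp (-(u ^ α))))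
        - α * ∫ u in Ioi (0:ℝ), Real.sin (u * y) * (u ^ (3*α - 3) * Real.exp (-(u ^ α)))) := by
  have hα0 : (0:ℝ) < α := by linarith
  have iB := st_intTrig h1 (s := 2*α - 2) (by linarith) _ (st_cos_cont y) (st_cos_bd y)
  have iS1 := st_intTrig h1 (s := 2*α - 3) (by linarith) _ (st_sin_cont y) (st_sin_bd y)
  have iS2 := st_intTrig h1 (s := 3*α - 3) (by linarith) _ (st_sin_cont y) (st_sin_bd y)
  have key : ∫ u in Ioi (0:ℝ),
      (y * (Real.cos (u * y) * (u ^ (2*α - 2) * Real.exp (-(u ^ α))))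
        + ((2*α - 2) * (Real.sin (u * y) * (u ^ (2*α - 3) * Real.exp (-(u ^ α))))
          - α * (Real.sin (u * y) * (u ^ (3*α - 3) * Real.exp (-(u ^ α))))))
      = 0 - Real.sin (0 * y) * ((0:ℝ) ^ (2*α - 2) * Real.exp (-((0:ℝ) ^ α))) := by
    apply integral_Ioi_of_hasDerivAt_of_tendsto
      (f := fun u : ℝ => Real.sin (u * y) * (u ^ (2*α - 2) * Real.exp (-(u ^ α))))
    · apply ContinuousAt.continuousWithinAt
      have hE : ContinuousAt (fun u : ℝ => Real.exp (-(u ^ α))) 0 :=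
        ((Real.continuousAt_rpow_const 0 α (Or.inr hα0.le)).neg).rexp
      have hP : ContinuousAt (fun u : ℝ => u ^ (2*α - 2)) 0 :=
        Real.continuousAt_rpow_const 0 (2*α - 2) (Or.inr (by linarith))
      exact ((st_sin_cont y).continuousAt).mul (hP.mul hE)
    · intro u hu
      have hd := ((hasDerivAt_mul_const y).sin).fun_mul
        ((Real.hasDerivAt_rpow_const (p := 2*α - 2) (Or.inl (ne_of_gt hu))).fun_mul
          (st_hasDerivE (ne_of_gt hα0) (ne_of_gt hu)))
      refine hd.congr_deriv ?_
      rw [show 2*α - 2 - 1 = 2*α - 3 by ring, show 3*α - 3 = (2*α - 2) + (α - 1) by ring,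
        Real.rpow_add hu]
      ring
    · exact (iB.const_mul y).add ((iS1.const_mul (2*α - 2)).sub (iS2.const_mul α))
    · exact (st_tendsto_trig h1 (2*α - 2) _ (st_sin_bd y)).congr (fun u => by simp)
  have hsub : IntegrableOn (fun u : ℝ =>
      (2*α - 2) * (Real.sin (u * y) * (u ^ (2*α - 3) * Real.exp (-(u ^ α))))
        - α * (Real.sin (u * y) * (u ^ (3*α - 3) * Real.exp (-(u ^ α))))) (Ioi 0) :=
    (iS1.const_mul (2*α - 2)).sub (iS2.const_mul α)
  rw [integral_add (iB.const_mul y) hsub,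
    integral_sub (iS1.const_mul (2*α - 2)) (iS2.const_mul α),
    integral_const_mul, integral_const_mul, integral_const_mul] at key
  simp [Real.zero_rpow (ne_of_gt (show (0:ℝ) < 2*α - 2 by linarith))] at key
  linarith

private lemma st_normTrig (h1 : 1 < α) {s : ℝ} (hs : -1 < s) (φ : ℝ → ℝ)
    (hφ : ∀ t, |φ t| ≤ 1) :
    |∫ u in Ioi (0:ℝ), φ u * (u ^ s * Real.exp (-(u ^ α)))|
      ≤ ∫ u in Ioi (0:ℝ), u ^ s * Real.exp (-(u ^ α)) := by
  rw [← Real.norm_eq_abs]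
  apply norm_integral_le_of_norm_le (st_intPow h1 hs)
  filter_upwards [ae_restrict_mem measurableSet_Ioi] with u hu
  have hg : (0:ℝ) ≤ u ^ s * Real.exp (-(u ^ α)) :=
    mul_nonneg (Real.rpow_nonneg (le_of_lt hu) s) (Real.exp_pos _).le
  rw [Real.norm_eq_abs, abs_mul, abs_of_nonneg hg]
  exact mul_le_of_le_one_left hg (hφ u)

private lemma st_E_le_one {u : ℝ} (hu : 0 ≤ u) : Real.exp (-(u ^ α)) ≤ 1 :=
  Real.exp_le_one_iff.mpr (neg_nonpos.mpr (Real.rpow_nonneg hu α))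

private lemma st_stepA_head (h1 : 1 < α) {b : ℝ} (hb : 0 < b) (y : ℝ) :
    |∫ u in Ioc (0:ℝ) b, Real.cos (u * y) * (u ^ (α - 2) * Real.exp (-(u ^ α)))|
      ≤ b ^ (α - 1) / (α - 1) := by
  have hint : IntegrableOn (fun u : ℝ => u ^ (α - 2)) (Ioc 0 b) := by
    have := intervalIntegral.intervalIntegrable_rpow' (a := 0) (b := b)
      (show (-1:ℝ) < α - 2 by linarith)
    rwa [intervalIntegrable_iff_integrableOn_Ioc_of_le hb.le] at this
  have hval : ∫ u in Ioc (0:ℝ) b, u ^ (α - 2) = b ^ (α - 1) / (α - 1) := by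
    rw [← intervalIntegral.integral_of_le hb.le,
      integral_rpow (Or.inl (show (-1:ℝ) < α - 2 by linarith)),
      show α - 2 + 1 = α - 1 by ring,
      Real.zero_rpow (ne_of_gt (show (0:ℝ) < α - 1 by linarith))]
    ring
  rw [← hval, ← Real.norm_eq_abs]
  apply norm_integral_le_of_norm_le hint
  filter_upwards [ae_restrict_mem measurableSet_Ioc] with u hu
  have hu0 : 0 < u := hu.1
  have hgE : (0:ℝ) ≤ u ^ (α - 2) * Real.exp (-(u ^ α)) :=
    mul_nonneg (Real.rpow_nonneg hu0.le _) (Real.exp_pos _).le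
  rw [Real.norm_eq_abs, abs_mul, abs_of_nonneg hgE]
  have b1 : |Real.cos (u * y)| * (u ^ (α - 2) * Real.exp (-(u ^ α)))
      ≤ u ^ (α - 2) * Real.exp (-(u ^ α)) :=
    mul_le_of_le_one_left hgE (Real.abs_cos_le_one _)
  have b2 : u ^ (α - 2) * Real.exp (-(u ^ α)) ≤ u ^ (α - 2) :=
    mul_le_of_le_one_right (Real.rpow_nonneg hu0.le _) (st_E_le_one hu0.le)
  linarith

private lemma st_stepA_tail (h1 : 1 < α) (h2 : α ≤ 2) {b y : ℝ} (hb : 0 < b) (hy : 0 < y) :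
    y * |∫ u in Ioi b, Real.cos (u * y) * (u ^ (α - 2) * Real.exp (-(u ^ α)))|
      ≤ 2 * b ^ (α - 2) := by
  have hα0 : (0:ℝ) < α := by linarith
  have hcont : ContinuousWithinAt (fun u : ℝ => u ^ (α - 2) * Real.exp (-(u ^ α))) (Ici b) b := by
    apply ContinuousAt.continuousWithinAt
    exact (Real.continuousAt_rpow_const b (α - 2) (Or.inl hb.ne')).mul
      ((Real.continuousAt_rpow_const b α (Or.inl hb.ne')).neg.rexp)
  have hderiv : ∀ u ∈ Ioi b, HasDerivAt (fun u : ℝ => u ^ (α - 2) * Real.exp (-(u ^ α)))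
      ((α - 2) * (u ^ (α - 3) * Real.exp (-(u ^ α)))
        - α * (u ^ (2*α - 3) * Real.exp (-(u ^ α)))) u := by
    intro u hu
    have hu0 : 0 < u := hb.trans hu
    have hd := (Real.hasDerivAt_rpow_const (p := α - 2) (Or.inl hu0.ne')).fun_mul
      (st_hasDerivE (ne_of_gt hα0) hu0.ne')
    refine hd.congr_deriv ?_
    rw [show α - 2 - 1 = α - 3 by ring, show 2*α - 3 = (α - 2) + (α - 1) by ring,
      Real.rpow_add hu0]
    ring
  have hneg : ∀ u ∈ Ioi b, (α - 2) * (u ^ (α - 3) * Real.exp (-(u ^ α)))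
      - α * (u ^ (2*α - 3) * Real.exp (-(u ^ α))) ≤ 0 := by
    intro u hu
    have hu0 : 0 < u := hb.trans hu
    have n1 : (0:ℝ) ≤ u ^ (α - 3) * Real.exp (-(u ^ α)) :=
      mul_nonneg (Real.rpow_nonneg hu0.le _) (Real.exp_pos _).le
    have n2 : (0:ℝ) ≤ u ^ (2*α - 3) * Real.exp (-(u ^ α)) :=
      mul_nonneg (Real.rpow_nonneg hu0.le _) (Real.exp_pos _).le
    nlinarith
  have htend := st_tendsto_pow_exp h1 (α - 2)
  have hint' : IntegrableOn (fun u : ℝ => (α - 2) * (u ^ (α - 3) * Real.exp (-(u ^ α)))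
      - α * (u ^ (2*α - 3) * Real.exp (-(u ^ α)))) (Ioi b) :=
    integrableOn_Ioi_deriv_of_nonpos hcont hderiv hneg htend
  have hFTCh : ∫ u in Ioi b, ((α - 2) * (u ^ (α - 3) * Real.exp (-(u ^ α)))
      - α * (u ^ (2*α - 3) * Real.exp (-(u ^ α))))
      = 0 - b ^ (α - 2) * Real.exp (-(b ^ α)) :=
    integral_Ioi_of_hasDerivAt_of_nonpos hcont hderiv hneg htend
  have ip1 : IntegrableOn (fun u : ℝ =>
      Real.cos (u * y) * (u ^ (α - 2) * Real.exp (-(u ^ α)))) (Ioi b) :=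
    (st_intTrig h1 (show (-1:ℝ) < α - 2 by linarith) _ (st_cos_cont y)
      (st_cos_bd y)).mono_set (Ioi_subset_Ioi hb.le)
  have ip2 : IntegrableOn (fun u : ℝ => Real.sin (u * y)
      * ((α - 2) * (u ^ (α - 3) * Real.exp (-(u ^ α)))
        - α * (u ^ (2*α - 3) * Real.exp (-(u ^ α))))) (Ioi b) :=
    hint'.bdd_mul (st_sin_cont y).aestronglyMeasurable (c := 1) (ae_of_all _ fun t => st_sin_bd y t)
  have key : ∫ u in Ioi b,
      (y * (Real.cos (u * y) * (u ^ (α - 2) * Real.exp (-(u ^ α))))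
        + Real.sin (u * y) * ((α - 2) * (u ^ (α - 3) * Real.exp (-(u ^ α)))
          - α * (u ^ (2*α - 3) * Real.exp (-(u ^ α)))))
      = 0 - Real.sin (b * y) * (b ^ (α - 2) * Real.exp (-(b ^ α))) := by
    apply integral_Ioi_of_hasDerivAt_of_tendsto
      (f := fun u : ℝ => Real.sin (u * y) * (u ^ (α - 2) * Real.exp (-(u ^ α))))
    · exact ((st_sin_cont y).continuousAt).continuousWithinAt.mul hcont
    · intro u hu
      have hd := ((hasDerivAt_mul_const y).sin).fun_mul (hderiv u hu)
      refine hd.congr_deriv ?_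
      ring
    · exact (ip1.const_mul y).add ip2
    · exact st_tendsto_trig h1 (α - 2) _ (st_sin_bd y)
  rw [integral_add (ip1.const_mul y) ip2, integral_const_mul] at key
  have hbd2 : |∫ u in Ioi b, Real.sin (u * y)
      * ((α - 2) * (u ^ (α - 3) * Real.exp (-(u ^ α)))
        - α * (u ^ (2*α - 3) * Real.exp (-(u ^ α))))| ≤ b ^ (α - 2) := by
    have : |∫ u in Ioi b, Real.sin (u * y)
        * ((α - 2) * (u ^ (α - 3) * Real.exp (-(u ^ α)))
          - α * (u ^ (2*α - 3) * Real.exp (-(u ^ α))))|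
        ≤ ∫ u in Ioi b, -((α - 2) * (u ^ (α - 3) * Real.exp (-(u ^ α)))
          - α * (u ^ (2*α - 3) * Real.exp (-(u ^ α)))) := by
      rw [← Real.norm_eq_abs]
      apply norm_integral_le_of_norm_le hint'.neg
      filter_upwards [ae_restrict_mem measurableSet_Ioi] with u hu
      rw [Real.norm_eq_abs, abs_mul, ← abs_neg
        ((α - 2) * (u ^ (α - 3) * Real.exp (-(u ^ α)))
          - α * (u ^ (2*α - 3) * Real.exp (-(u ^ α)))),
        abs_of_nonneg (neg_nonneg.mpr (hneg u hu))]
      exact mul_le_of_le_one_left (neg_nonneg.mpr (hneg u hu)) (st_sin_bd y u)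
    rw [integral_neg, hFTCh] at this
    have hE1 : b ^ (α - 2) * Real.exp (-(b ^ α)) ≤ b ^ (α - 2) :=
      mul_le_of_le_one_right (Real.rpow_nonneg hb.le _) (st_E_le_one hb.le)
    linarith
  have hbd1 : |Real.sin (b * y) * (b ^ (α - 2) * Real.exp (-(b ^ α)))| ≤ b ^ (α - 2) := by
    have hnn : (0:ℝ) ≤ b ^ (α - 2) * Real.exp (-(b ^ α)) :=
      mul_nonneg (Real.rpow_nonneg hb.le _) (Real.exp_pos _).le
    rw [abs_mul, abs_of_nonneg hnn]
    have hh : |Real.sin (b * y)| * (b ^ (α - 2) * Real.exp (-(b ^ α)))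
        ≤ b ^ (α - 2) * Real.exp (-(b ^ α)) :=
      mul_le_of_le_one_left hnn (st_sin_bd y b)
    have hE1 : b ^ (α - 2) * Real.exp (-(b ^ α)) ≤ b ^ (α - 2) :=
      mul_le_of_le_one_right (Real.rpow_nonneg hb.le _) (st_E_le_one hb.le)
    linarith
  have keyeq : y * ∫ u in Ioi b, Real.cos (u * y) * (u ^ (α - 2) * Real.exp (-(u ^ α)))
      = - (Real.sin (b * y) * (b ^ (α - 2) * Real.exp (-(b ^ α))))
        - ∫ u in Ioi b, Real.sin (u * y)
          * ((α - 2) * (u ^ (α - 3) * Real.exp (-(u ^ α)))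
            - α * (u ^ (2*α - 3) * Real.exp (-(u ^ α)))) := by
    linarith
  have habs : y * |∫ u in Ioi b, Real.cos (u * y) * (u ^ (α - 2) * Real.exp (-(u ^ α)))|
      = |y * ∫ u in Ioi b, Real.cos (u * y) * (u ^ (α - 2) * Real.exp (-(u ^ α)))| := by
    rw [abs_mul, abs_of_pos hy]
  rw [habs, keyeq]
  calc |_ - _| ≤ |Real.sin (b * y) * (b ^ (α - 2) * Real.exp (-(b ^ α)))|
        + |∫ u in Ioi b, Real.sin (u * y)
          * ((α - 2) * (u ^ (α - 3) * Real.exp (-(u ^ α)))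
            - α * (u ^ (2*α - 3) * Real.exp (-(u ^ α))))| := by
        rw [sub_eq_add_neg]
        refine le_trans (abs_add_le _ _) ?_
        rw [abs_neg, abs_neg]
    _ ≤ 2 * b ^ (α - 2) := by linarith

end Steps

private lemma st_split {α : ℝ} (h1 : 1 < α) {b : ℝ} (hb : 0 < b) (y : ℝ) :
    ∫ u in Ioi (0:ℝ), Real.cos (u * y) * (u ^ (α - 2) * Real.exp (-(u ^ α)))
      = (∫ u in Ioc (0:ℝ) b, Real.cos (u * y) * (u ^ (α - 2) * Real.exp (-(u ^ α))))
        + ∫ u in Ioi b, Real.cos (u * y) * (u ^ (α - 2) * Real.exp (-(u ^ α))) := by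
  have iA := st_intTrig h1 (show (-1:ℝ) < α - 2 by linarith) _ (st_cos_cont y) (st_cos_bd y)
  rw [← Ioc_union_Ioi_eq_Ioi hb.le,
    setIntegral_union Ioc_disjoint_Ioi_same measurableSet_Ioi
      (iA.mono_set Ioc_subset_Ioi_self) (iA.mono_set (Ioi_subset_Ioi hb.le))]

set_option maxHeartbeats 2000000 in
theorem smalltime_prop52_b (α : ℝ) (h1 : 1 < α) (h2 : α ≤ 2)
    (p₁ : ℝ → ℝ)
    (hp : ∀ x : ℝ, p₁ x = (1 / π) * ∫ u in Ioi (0:ℝ), Real.cos (u * x) * Real.exp (-(u ^ α))) :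
    ∀ ε : ℝ, 0 < ε → ∃ c : ℝ, ∀ x : ℝ, ε < |x| → |x| ^ (α + 1) * |p₁ x| ≤ c := by
  intro ε hε
  have hα0 : (0:ℝ) < α := by linarith
  set J1 : ℝ := ∫ u in Ioi (0:ℝ), u ^ (2*α - 3) * Real.exp (-(u ^ α)) with hJ1
  set J2 : ℝ := ∫ u in Ioi (0:ℝ), u ^ (3*α - 3) * Real.exp (-(u ^ α)) with hJ2
  set M : ℝ := ∫ u in Ioi (0:ℝ), Real.exp (-(u ^ α)) with hM
  set K : ℝ := (2*α - 2) * J1 + α * J2 with hK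
  have hJ1n : 0 ≤ J1 := setIntegral_nonneg measurableSet_Ioi fun u hu =>
    mul_nonneg (Real.rpow_nonneg (le_of_lt hu) _) (Real.exp_pos _).le
  have hJ2n : 0 ≤ J2 := setIntegral_nonneg measurableSet_Ioi fun u hu =>
    mul_nonneg (Real.rpow_nonneg (le_of_lt hu) _) (Real.exp_pos _).le
  have hMn : 0 ≤ M := setIntegral_nonneg measurableSet_Ioi fun u _ => (Real.exp_pos _).le
  have hKn : 0 ≤ K := by
    have h22 : (0:ℝ) ≤ 2*α - 2 := by linarith
    exact add_nonneg (mul_nonneg h22 hJ1n) (mul_nonneg hα0.le hJ2n)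
  have hπ : (0:ℝ) < π := Real.pi_pos
  refine ⟨(1/π) * M + (1/π) * (α + 2*α*(α-1) + α^2*K), fun x hx => ?_⟩
  have hy0 : 0 < |x| := lt_trans hε hx
  set y : ℝ := |x| with hy
  -- rewrite p₁ x in terms of y
  have hq : p₁ x = (1/π) * ∫ u in Ioi (0:ℝ), Real.cos (u * y) * Real.exp (-(u ^ α)) := by
    rw [hp x]
    congr 1
    refine setIntegral_congr_fun measurableSet_Ioi fun u hu => ?_
    have : u * y = |u * x| := by rw [abs_mul, abs_of_pos hu]
    rw [this, Real.cos_abs]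
  set I0 : ℝ := ∫ u in Ioi (0:ℝ), Real.cos (u * y) * Real.exp (-(u ^ α)) with hI0def
  have hI0M : |I0| ≤ M := by
    rw [← Real.norm_eq_abs]
    apply norm_integral_le_of_norm_le (st_intE h1)
    filter_upwards [] with u
    rw [Real.norm_eq_abs, abs_mul, abs_of_pos (Real.exp_pos _)]
    exact mul_le_of_le_one_left (Real.exp_pos _).le (Real.abs_cos_le_one _)
  have hc2n : (0:ℝ) ≤ (1/π) * (α + 2*α*(α-1) + α^2*K) := by
    have hk2 : (0:ℝ) ≤ α^2*K := mul_nonneg (sq_nonneg α) hKn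
    have hk3 : (0:ℝ) ≤ 2*α*(α-1) := mul_nonneg (by linarith) (by linarith)
    have : (0:ℝ) ≤ α + 2*α*(α-1) + α^2*K := by linarith
    positivity
  rcases le_or_gt y 1 with hyle | hygt
  · -- small y case
    have hpow : y ^ (α + 1) ≤ 1 := Real.rpow_le_one (abs_nonneg x) hyle (by linarith)
    have hpb : |p₁ x| ≤ (1/π) * M := by
      rw [hq, abs_mul, abs_of_pos (by positivity : (0:ℝ) < 1/π)]
      exact mul_le_mul_of_nonneg_left hI0M (by positivity)
    have h1' : y ^ (α + 1) * |p₁ x| ≤ (1/π) * M := by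
      have := mul_le_mul hpow hpb (abs_nonneg _) zero_le_one
      simpa using this
    linarith
  · -- large y case
    have hy1 : 1 ≤ y := hygt.le
    have hy0' : (0:ℝ) < y := by linarith
    set b : ℝ := 1/y with hb
    have hbpos : 0 < b := by positivity
    set I1 : ℝ := ∫ u in Ioi (0:ℝ), Real.sin (u * y) * (u ^ (α - 1) * Real.exp (-(u ^ α))) with hI1
    set A : ℝ := ∫ u in Ioi (0:ℝ), Real.cos (u * y) * (u ^ (α - 2) * Real.exp (-(u ^ α))) with hA
    set B : ℝ := ∫ u in Ioi (0:ℝ), Real.cos (u * y) * (u ^ (2*α - 2) * Real.exp (-(u ^ α))) with hB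
    set S1 : ℝ := ∫ u in Ioi (0:ℝ), Real.sin (u * y) * (u ^ (2*α - 3) * Real.exp (-(u ^ α))) with hS1
    set S2 : ℝ := ∫ u in Ioi (0:ℝ), Real.sin (u * y) * (u ^ (3*α - 3) * Real.exp (-(u ^ α))) with hS2
    set Ah : ℝ := ∫ u in Ioc (0:ℝ) b, Real.cos (u * y) * (u ^ (α - 2) * Real.exp (-(u ^ α))) with hAh
    set At : ℝ := ∫ u in Ioi b, Real.cos (u * y) * (u ^ (α - 2) * Real.exp (-(u ^ α))) with hAt
    have s1 := st_step1 h1 y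
    have s2 := st_step2 h1 h2 y
    have sB := st_stepB h1 y
    have hS1b : |S1| ≤ J1 := st_normTrig h1 (by linarith) _ (st_sin_bd y)
    have hS2b : |S2| ≤ J2 := st_normTrig h1 (by linarith) _ (st_sin_bd y)
    have hyB : |y * B| ≤ K := by
      rw [sB]
      calc |(-((2*α - 2) * S1 - α * S2))| = |(2*α - 2) * S1 - α * S2| := abs_neg _
        _ ≤ |(2*α - 2) * S1| + |α * S2| := abs_sub _ _
        _ = (2*α - 2) * |S1| + α * |S2| := by
            rw [abs_mul, abs_mul, abs_of_nonneg (by linarith : (0:ℝ) ≤ 2*α - 2),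
              abs_of_pos hα0]
        _ ≤ (2*α - 2) * J1 + α * J2 := by
            have := mul_le_mul_of_nonneg_left hS1b (by linarith : (0:ℝ) ≤ 2*α - 2)
            have := mul_le_mul_of_nonneg_left hS2b hα0.le
            linarith
    have hAsplit : A = Ah + At := st_split h1 hbpos y
    have hAhb : |Ah| ≤ b ^ (α - 1) / (α - 1) := st_stepA_head h1 hbpos y
    have hAtb : y * |At| ≤ 2 * b ^ (α - 2) := st_stepA_tail h1 h2 hbpos hy0'
    -- rpow facts
    set P : ℝ := y ^ (α - 1) with hP
    have hPpos : 0 < P := Real.rpow_pos_of_pos hy0' _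
    have hQpos : 0 < y ^ (α - 2) := Real.rpow_pos_of_pos hy0' _
    have hPy : P = y ^ (α - 2) * y := by
      rw [hP, show α - 1 = (α - 2) + 1 by ring, Real.rpow_add hy0', Real.rpow_one]
    have hbinv1 : P * b ^ (α - 1) = 1 := by
      rw [hb, one_div, Real.inv_rpow hy0'.le, hP,
        mul_inv_cancel₀ (ne_of_gt (Real.rpow_pos_of_pos hy0' _))]
    have hbinv2 : y ^ (α - 2) * b ^ (α - 2) = 1 := by
      rw [hb, one_div, Real.inv_rpow hy0'.le,
        mul_inv_cancel₀ (ne_of_gt (Real.rpow_pos_of_pos hy0' _))]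
    have hQle1 : y ^ (α - 2) ≤ 1 := Real.rpow_le_one_of_one_le_of_nonpos hy1 (by linarith)
    have hpow_split : y ^ (α + 1) = P * (y * y) := by
      rw [hP, show α + 1 = (α - 1) + 1 + 1 by ring, Real.rpow_add hy0',
        Real.rpow_add hy0', Real.rpow_one]
      ring
    -- the chain
    have hI0chain : y * (y * I0) = α * ((α - 1) * A - α * B) := by
      calc y * (y * I0) = α * (y * I1) := by rw [s1]; ring
        _ = α * ((α - 1) * A - α * B) := by rw [s2]
    -- bound P * |A|  and P * |B|
    have hPAh : P * |Ah| ≤ 1 / (α - 1) := by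
      have := mul_le_mul_of_nonneg_left hAhb hPpos.le
      calc P * |Ah| ≤ P * (b ^ (α - 1) / (α - 1)) := this
        _ = (P * b ^ (α - 1)) / (α - 1) := by ring
        _ = 1 / (α - 1) := by rw [hbinv1]
    have hPAt : P * |At| ≤ 2 := by
      calc P * |At| = y ^ (α - 2) * (y * |At|) := by rw [hPy]; ring
        _ ≤ y ^ (α - 2) * (2 * b ^ (α - 2)) := mul_le_mul_of_nonneg_left hAtb hQpos.le
        _ = 2 * (y ^ (α - 2) * b ^ (α - 2)) := by ring
        _ = 2 := by rw [hbinv2]; ring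
    have hyB' : y * |B| ≤ K := by
      have e : y * |B| = |y * B| := by rw [abs_mul, abs_of_pos hy0']
      rw [e]; exact hyB
    have hPB : P * |B| ≤ K := by
      calc P * |B| = y ^ (α - 2) * (y * |B|) := by rw [hPy]; ring
        _ ≤ y ^ (α - 2) * K := mul_le_mul_of_nonneg_left hyB' hQpos.le
        _ ≤ 1 * K := mul_le_mul_of_nonneg_right hQle1 hKn
        _ = K := one_mul K
    have hPA : P * |A| ≤ 1 / (α - 1) + 2 := by
      have habs : |A| ≤ |Ah| + |At| := hAsplit ▸ abs_add_le Ah At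
      have := mul_le_mul_of_nonneg_left habs hPpos.le
      calc P * |A| ≤ P * (|Ah| + |At|) := this
        _ = P * |Ah| + P * |At| := by ring
        _ ≤ 1 / (α - 1) + 2 := by linarith
    -- final bound
    have hfinal : y ^ (α + 1) * |I0| ≤ α + 2*α*(α-1) + α^2 * K := by
      have e1 : y ^ (α + 1) * |I0| = P * |y * (y * I0)| := by
        rw [abs_mul, abs_mul, abs_of_pos hy0', hpow_split]
        ring
      rw [e1, hI0chain]
      have e2 : |α * ((α - 1) * A - α * B)| ≤ α * ((α - 1) * |A| + α * |B|) := by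
        rw [abs_mul, abs_of_pos hα0]
        have h3 : |(α - 1) * A - α * B| ≤ |(α - 1) * A| + |α * B| := abs_sub _ _
        rw [abs_mul, abs_mul, abs_of_nonneg (by linarith : (0:ℝ) ≤ α - 1),
          abs_of_pos hα0] at h3
        exact mul_le_mul_of_nonneg_left h3 hα0.le
      calc P * |α * ((α - 1) * A - α * B)| ≤ P * (α * ((α - 1) * |A| + α * |B|)) :=
            mul_le_mul_of_nonneg_left e2 hPpos.le
        _ = α * (α - 1) * (P * |A|) + α * α * (P * |B|) := by ring
        _ ≤ α * (α - 1) * (1 / (α - 1) + 2) + α * α * K := by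
            have t1 := mul_le_mul_of_nonneg_left hPA
              (mul_nonneg hα0.le (by linarith) : (0:ℝ) ≤ α * (α - 1))
            have t2 := mul_le_mul_of_nonneg_left hPB (by positivity : (0:ℝ) ≤ α * α)
            exact add_le_add t1 t2
        _ = α * ((α - 1) * (1 / (α - 1))) + 2*α*(α-1) + α^2 * K := by ring
        _ = α + 2*α*(α-1) + α^2 * K := by
            rw [mul_one_div_cancel (ne_of_gt (by linarith : (0:ℝ) < α - 1))]
            ring
    have : y ^ (α + 1) * |p₁ x| = (1/π) * (y ^ (α + 1) * |I0|) := by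
      rw [hq, abs_mul, abs_of_pos (by positivity : (0:ℝ) < 1/π)]
      ring
    rw [this]
    have := mul_le_mul_of_nonneg_left hfinal (by positivity : (0:ℝ) ≤ 1/π)
    have hMterm : (0:ℝ) ≤ (1/π) * M := by positivity
    linarith
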